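/- Let n = 1 and suppose 1 < q < 2 and 0 < b < q−1, or q > 2 and b > q−1. Let k_b ∈ (0,1) be the unique zero of ψ(k) = 1 + b·k^q − b·k^{q−2} − k^{2q−2} in (0,1), and set μ_b := (1 + b·k_b^q)^{−1/(2q−2)}. Then the three pairs (u₀, u₀)·(1+b)^{−1/(2q−2)}, (μ_b·u₀, μ_b·k_b·u₀), and (μ_b·k_b·u₀, μ_b·u₀) are three pairwise distinct positive solutions of the system −u''(r) + u(r) = u(r)^{2q−1} + b·u(r)^{q−1} v(r)^q and −v''(r) + v(r) = v(r)^{2q−1} + b·v(r)^{q−1} u(r)^q for r > 0, with u'(0) = v'(0) = 0, u, v > 0, and u(r), v(r) → 0 as r → ∞. In particular uniqueness of positive solutions fails. -/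

import Mathlib

open Real Set Filter

/-- `u` is twice continuously differentiable on `[0,∞)`, with first and second
derivative functions `u'` and `u''`. -/
def C2 (u u' u'' : ℝ → ℝ) : Prop :=
  (∀ r ∈ Set.Ici (0:ℝ), HasDerivWithinAt u (u' r) (Set.Ici 0) r) ∧
  (∀ r ∈ Set.Ici (0:ℝ), HasDerivWithinAt u' (u'' r) (Set.Ici 0) r) ∧
  ContinuousOn u'' (Set.Ici 0)

/-- `(u,v)` (with derivative data) is a positive solution of the one-dimensional
nonlinear Schrödinger system `-u'' + u = u^{2q-1} + b u^{q-1} v^q`,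
`-v'' + v = v^{2q-1} + b v^{q-1} u^q` on `(0,∞)`,
with `u'(0) = v'(0) = 0`, `u, v > 0` and `u(r), v(r) → 0` as `r → ∞`. -/
def IsPosSolNLS1 (q b : ℝ) (u u' u'' v v' v'' : ℝ → ℝ) : Prop :=
  C2 u u' u'' ∧ C2 v v' v'' ∧
  (∀ r : ℝ, 0 ≤ r → 0 < u r ∧ 0 < v r) ∧
  (∀ r : ℝ, 0 < r → -u'' r + u r = u r ^ (2 * q - 1) + b * u r ^ (q - 1) * v r ^ q) ∧
  (∀ r : ℝ, 0 < r → -v'' r + v r = v r ^ (2 * q - 1) + b * v r ^ (q - 1) * u r ^ q) ∧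
  u' 0 = 0 ∧ v' 0 = 0 ∧
  Tendsto u atTop (nhds 0) ∧ Tendsto v atTop (nhds 0)

lemma C2_const_mul (c : ℝ) (u u' u'' : ℝ → ℝ) (h : C2 u u' u'') :
    C2 (fun r => c * u r) (fun r => c * u' r) (fun r => c * u'' r) :=
  ⟨fun r hr => (h.1 r hr).const_mul c, fun r hr => (h.2.1 r hr).const_mul c,
   continuousOn_const.mul h.2.2⟩

lemma eq_aux (q b A B : ℝ) (hA : 0 < A) (hB : 0 < B)
    (hcond : A ^ (2*q-2) + b * A ^ (q-2) * B ^ q = 1)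
    (x : ℝ) (hx : 0 < x) :
    A * x ^ (2*q-1) = (A * x) ^ (2*q-1) + b * (A * x) ^ (q-1) * (B * x) ^ q := by
  rw [Real.mul_rpow hA.le hx.le, Real.mul_rpow hA.le hx.le, Real.mul_rpow hB.le hx.le]
  have e1 : A ^ (2*q-1) = A ^ (2*q-2) * A := by
    rw [← Real.rpow_add_one hA.ne' (2*q-2)]; ring_nf
  have e2 : A ^ (q-1) = A ^ (q-2) * A := by
    rw [← Real.rpow_add_one hA.ne' (q-2)]; ring_nf
  have e3 : x ^ (q-1) * x ^ q = x ^ (2*q-1) := by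
    rw [← Real.rpow_add hx]; ring_nf
  rw [e1, e2]
  linear_combination (-(x ^ (2*q-1) * A)) * hcond - b * A ^ (q-2) * A * B ^ q * e3

lemma sol_aux (q b A B : ℝ) (hA : 0 < A) (hB : 0 < B)
    (hAB : A ^ (2*q-2) + b * A ^ (q-2) * B ^ q = 1)
    (hBA : B ^ (2*q-2) + b * B ^ (q-2) * A ^ q = 1)
    (u₀ u₀' u₀'' : ℝ → ℝ) (hC2 : C2 u₀ u₀' u₀'')
    (hpos : ∀ r : ℝ, 0 ≤ r → 0 < u₀ r)
    (heq : ∀ r : ℝ, 0 < r → -u₀'' r + u₀ r = u₀ r ^ (2 * q - 1))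
    (hd : u₀' 0 = 0) (hlim : Tendsto u₀ atTop (nhds 0)) :
    IsPosSolNLS1 q b (fun r => A * u₀ r) (fun r => A * u₀' r) (fun r => A * u₀'' r)
      (fun r => B * u₀ r) (fun r => B * u₀' r) (fun r => B * u₀'' r) := by
  refine ⟨C2_const_mul A _ _ _ hC2, C2_const_mul B _ _ _ hC2,
    fun r hr => ⟨mul_pos hA (hpos r hr), mul_pos hB (hpos r hr)⟩, ?_, ?_,
    by simp [hd], by simp [hd], by simpa using hlim.const_mul A,
    by simpa using hlim.const_mul B⟩
  · intro r hr
    have h := eq_aux q b A B hA hB hAB (u₀ r) (hpos r hr.le)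
    have h2 := heq r hr
    linear_combination A * h2 + h
  · intro r hr
    have h := eq_aux q b B A hB hA hBA (u₀ r) (hpos r hr.le)
    have h2 := heq r hr
    linear_combination B * h2 + h

/-- Remark 2 (i): in dimension `n = 1`, if `1 < q < 2, 0 < b < q-1` or `q > 2, b > q-1`,
then with `k_b` the unique zero of `ψ` in `(0,1)` and `μ_b = (1+b k_b^q)^{-1/(2q-2)}`,
the pairs `(1+b)^{-1/(2q-2)}(u₀,u₀)`, `(μ_b u₀, μ_b k_b u₀)`, `(μ_b k_b u₀, μ_b u₀)`
are three pairwise distinct positive solutions; in particular uniqueness fails. -/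
theorem three_distinct_solutions (q b k : ℝ)
    (hqb : (1 < q ∧ q < 2 ∧ 0 < b ∧ b < q - 1) ∨ (2 < q ∧ q - 1 < b))
    (hk : k ∈ Set.Ioo (0:ℝ) 1)
    (hkzero : 1 + b * k ^ q - b * k ^ (q - 2) - k ^ (2 * q - 2) = 0)
    (hkunique : ∀ k' ∈ Set.Ioo (0:ℝ) 1,
      1 + b * k' ^ q - b * k' ^ (q - 2) - k' ^ (2 * q - 2) = 0 → k' = k)
    (u₀ u₀' u₀'' : ℝ → ℝ)
    (hu₀C2 : C2 u₀ u₀' u₀'')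
    (hu₀pos : ∀ r : ℝ, 0 ≤ r → 0 < u₀ r)
    (hu₀eq : ∀ r : ℝ, 0 < r → -u₀'' r + u₀ r = u₀ r ^ (2 * q - 1))
    (hu₀' : u₀' 0 = 0) (hu₀lim : Tendsto u₀ atTop (nhds 0)) :
    IsPosSolNLS1 q b
      (fun r => (1 + b) ^ (-(1 / (2 * q - 2))) * u₀ r)
      (fun r => (1 + b) ^ (-(1 / (2 * q - 2))) * u₀' r)
      (fun r => (1 + b) ^ (-(1 / (2 * q - 2))) * u₀'' r)
      (fun r => (1 + b) ^ (-(1 / (2 * q - 2))) * u₀ r)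
      (fun r => (1 + b) ^ (-(1 / (2 * q - 2))) * u₀' r)
      (fun r => (1 + b) ^ (-(1 / (2 * q - 2))) * u₀'' r) ∧
    IsPosSolNLS1 q b
      (fun r => (1 + b * k ^ q) ^ (-(1 / (2 * q - 2))) * u₀ r)
      (fun r => (1 + b * k ^ q) ^ (-(1 / (2 * q - 2))) * u₀' r)
      (fun r => (1 + b * k ^ q) ^ (-(1 / (2 * q - 2))) * u₀'' r)
      (fun r => (1 + b * k ^ q) ^ (-(1 / (2 * q - 2))) * k * u₀ r)
      (fun r => (1 + b * k ^ q) ^ (-(1 / (2 * q - 2))) * k * u₀' r)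
      (fun r => (1 + b * k ^ q) ^ (-(1 / (2 * q - 2))) * k * u₀'' r) ∧
    IsPosSolNLS1 q b
      (fun r => (1 + b * k ^ q) ^ (-(1 / (2 * q - 2))) * k * u₀ r)
      (fun r => (1 + b * k ^ q) ^ (-(1 / (2 * q - 2))) * k * u₀' r)
      (fun r => (1 + b * k ^ q) ^ (-(1 / (2 * q - 2))) * k * u₀'' r)
      (fun r => (1 + b * k ^ q) ^ (-(1 / (2 * q - 2))) * u₀ r)
      (fun r => (1 + b * k ^ q) ^ (-(1 / (2 * q - 2))) * u₀' r)
      (fun r => (1 + b * k ^ q) ^ (-(1 / (2 * q - 2))) * u₀'' r) ∧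
    (∃ r : ℝ, 0 ≤ r ∧
      ((1 + b) ^ (-(1 / (2 * q - 2))) * u₀ r,
       (1 + b) ^ (-(1 / (2 * q - 2))) * u₀ r) ≠
      ((1 + b * k ^ q) ^ (-(1 / (2 * q - 2))) * u₀ r,
       (1 + b * k ^ q) ^ (-(1 / (2 * q - 2))) * k * u₀ r)) ∧
    (∃ r : ℝ, 0 ≤ r ∧
      ((1 + b) ^ (-(1 / (2 * q - 2))) * u₀ r,
       (1 + b) ^ (-(1 / (2 * q - 2))) * u₀ r) ≠
      ((1 + b * k ^ q) ^ (-(1 / (2 * q - 2))) * k * u₀ r,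
       (1 + b * k ^ q) ^ (-(1 / (2 * q - 2))) * u₀ r)) ∧
    (∃ r : ℝ, 0 ≤ r ∧
      ((1 + b * k ^ q) ^ (-(1 / (2 * q - 2))) * u₀ r,
       (1 + b * k ^ q) ^ (-(1 / (2 * q - 2))) * k * u₀ r) ≠
      ((1 + b * k ^ q) ^ (-(1 / (2 * q - 2))) * k * u₀ r,
       (1 + b * k ^ q) ^ (-(1 / (2 * q - 2))) * u₀ r)) := by
  have hq1 : 1 < q := by rcases hqb with ⟨h, _⟩ | ⟨h, _⟩ <;> linarith
  have hbpos : 0 < b := by rcases hqb with ⟨_, _, h, _⟩ | ⟨h1, h2⟩ <;> nlinarith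
  have he : (0:ℝ) < 2 * q - 2 := by linarith
  have hkq1 : k ^ q < 1 := Real.rpow_lt_one hk.1.le hk.2 (by linarith)
  have hkqpos : 0 < k ^ q := Real.rpow_pos_of_pos hk.1 q
  have h1b : (0:ℝ) < 1 + b := by linarith
  have h1bk : (0:ℝ) < 1 + b * k ^ q := by nlinarith
  set α : ℝ := -(1 / (2 * q - 2)) with hα
  have key : ∀ x : ℝ, 0 < x → ((x ^ α) ^ (2*q-2)) = x⁻¹ := by
    intro x hx
    rw [← Real.rpow_mul hx.le]
    have hm : α * (2*q-2) = -1 := by rw [hα]; field_simp; rw [div_self (by linarith : q - 1 ≠ 0)]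
    rw [hm, Real.rpow_neg_one]
  set μ1 : ℝ := (1 + b) ^ α with hμ1def
  set μ : ℝ := (1 + b * k ^ q) ^ α with hμdef
  have hμ1pos : 0 < μ1 := Real.rpow_pos_of_pos h1b α
  have hμpos : 0 < μ := Real.rpow_pos_of_pos h1bk α
  have hμ1e : μ1 ^ (2*q-2) = (1+b)⁻¹ := by
    rw [hμ1def]; exact key _ h1b
  have hμe : μ ^ (2*q-2) = (1 + b * k ^ q)⁻¹ := by
    rw [hμdef]; exact key _ h1bk
  have hμ1e' : μ1 ^ (2*q-2) * (1+b) = 1 := by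
    rw [hμ1e]; exact inv_mul_cancel₀ h1b.ne'
  have hμe' : μ ^ (2*q-2) * (1 + b * k ^ q) = 1 := by
    rw [hμe]; exact inv_mul_cancel₀ h1bk.ne'
  have m1 : μ1 ^ (q-2) * μ1 ^ q = μ1 ^ (2*q-2) := by
    rw [← Real.rpow_add hμ1pos]; ring_nf
  have m2 : μ ^ (q-2) * μ ^ q = μ ^ (2*q-2) := by
    rw [← Real.rpow_add hμpos]; ring_nf
  have hkz : k ^ (2*q-2) + b * k ^ (q-2) = 1 + b * k ^ q := by
    have : 2 * q - 2 = 2*q-2 := rfl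
    nlinarith [hkzero]
  have cond1 : μ1 ^ (2*q-2) + b * μ1 ^ (q-2) * μ1 ^ q = 1 := by
    linear_combination b * m1 + hμ1e'
  have cond2a : μ ^ (2*q-2) + b * μ ^ (q-2) * (μ*k) ^ q = 1 := by
    rw [Real.mul_rpow hμpos.le hk.1.le]
    linear_combination b * k ^ q * m2 + hμe'
  have cond2b : (μ*k) ^ (2*q-2) + b * (μ*k) ^ (q-2) * μ ^ q = 1 := by
    rw [Real.mul_rpow hμpos.le hk.1.le, Real.mul_rpow hμpos.le hk.1.le]
    linear_combination b * k ^ (q-2) * m2 + μ ^ (2*q-2) * hkz + hμe'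
  have sol1 := sol_aux q b μ1 μ1 hμ1pos hμ1pos cond1 cond1
    u₀ u₀' u₀'' hu₀C2 hu₀pos hu₀eq hu₀' hu₀lim
  have sol2 := sol_aux q b μ (μ*k) hμpos (mul_pos hμpos hk.1) cond2a cond2b
    u₀ u₀' u₀'' hu₀C2 hu₀pos hu₀eq hu₀' hu₀lim
  have sol3 := sol_aux q b (μ*k) μ (mul_pos hμpos hk.1) hμpos cond2b cond2a
    u₀ u₀' u₀'' hu₀C2 hu₀pos hu₀eq hu₀' hu₀lim
  have hx : 0 < u₀ 0 := hu₀pos 0 le_rfl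
  have hμne : μ1 ≠ μ := by
    intro h
    have h2 : (1+b)⁻¹ = (1 + b * k ^ q)⁻¹ := by rw [← hμ1e, ← hμe, h]
    have h3 : (1+b : ℝ) = 1 + b * k ^ q := by rwa [inv_inj] at h2
    nlinarith
  have hμkne : μ * k < μ := by nlinarith [mul_pos hμpos (sub_pos.mpr hk.2)]
  refine ⟨sol1, by simpa only [mul_assoc] using sol2, by simpa only [mul_assoc] using sol3,
    ⟨0, le_rfl, fun h => hμne (mul_right_cancel₀ hx.ne' (congrArg Prod.fst h))⟩,
    ⟨0, le_rfl, fun h => hμne (mul_right_cancel₀ hx.ne' (congrArg Prod.snd h))⟩,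
    ⟨0, le_rfl, fun h => ?_⟩⟩
  have h1 : μ * u₀ 0 = μ * k * u₀ 0 := congrArg Prod.fst h
  have h2 : μ = μ * k := mul_right_cancel₀ hx.ne' h1
  exact absurd h2.symm hμkne.ne
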